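/- Let k be a perfect field of characteristic p > 0, R = k[x_1,…,x_n], l ≥ 1, and let M, N be R-modules. Regard Hom_R(F^l_*(M), N) (R-linear maps from M-with-scalars-restricted-along-φ_l to N) as an R-module via (r·g)(x) = g(r·x) for r ∈ R, x ∈ M. Then the map Θ : Hom_R(F^l_*(M), N) → Hom_R(M, F^{*l}(N)) defined by Θ(g)(x) = Σ_ī e_ī ⊗ g(e_{\overline{p^l−1}−ī} · x), where the sum runs over all multi-indices ī with 0 ≤ i_j ≤ p^l − 1 and \overline{p^l−1}−ī is the componentwise difference, is an R-linear bijection; its inverse sends an R-linear map f : M → F^{*l}(N) to the coordinate function f_{\overline{p^l−1}}, where f(x) = Σ_ī e_ī ⊗ f_ī(x) is the unique expansion of f in the basis {e_ī}. -/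

import Mathlib

open MvPolynomial TensorProduct

noncomputable section

/-- The target copy of `R = k[x₁,…,xₙ]`, regarded as an algebra over `R`
via the `l`-th iterate of the Frobenius, `φ_l : r ↦ r ^ (p ^ l)`. -/
def FrobTarget (k : Type) [Field k] (n p l : ℕ) : Type := MvPolynomial (Fin n) k

instance (k : Type) [Field k] (n p l : ℕ) : CommRing (FrobTarget k n p l) :=
  inferInstanceAs (CommRing (MvPolynomial (Fin n) k))

/-- `φ_l : R → R`, `r ↦ r ^ (p ^ l)`, viewed as a ring homomorphism into the target copy. -/
def frobHom (k : Type) [Field k] (n p l : ℕ) [Fact p.Prime] [CharP k p] :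
    MvPolynomial (Fin n) k →+* FrobTarget k n p l :=
  iterateFrobenius (MvPolynomial (Fin n) k) p l

instance (k : Type) [Field k] (n p l : ℕ) [Fact p.Prime] [CharP k p] :
    Algebra (MvPolynomial (Fin n) k) (FrobTarget k n p l) :=
  (frobHom k n p l).toAlgebra

/-- The Frobenius base change `F^{*l}(N) = R ⊗_{φ_l} N`:  the tensor product in which the
left-hand copy of `R` is a right `R`-module via `φ_l`, with `R` acting through the left factor. -/
def Fstar (k : Type) [Field k] (n p l : ℕ) [Fact p.Prime] [CharP k p]
    (N : Type) [AddCommGroup N] [Module (MvPolynomial (Fin n) k) N] : Type :=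
  FrobTarget k n p l ⊗[MvPolynomial (Fin n) k] N

instance (k : Type) [Field k] (n p l : ℕ) [Fact p.Prime] [CharP k p]
    (N : Type) [AddCommGroup N] [Module (MvPolynomial (Fin n) k) N] :
    AddCommGroup (Fstar k n p l N) :=
  inferInstanceAs (AddCommGroup (FrobTarget k n p l ⊗[MvPolynomial (Fin n) k] N))

/-- `R` acts on `F^{*l}(N)` through the left factor. -/
instance (k : Type) [Field k] (n p l : ℕ) [Fact p.Prime] [CharP k p]
    (N : Type) [AddCommGroup N] [Module (MvPolynomial (Fin n) k) N] :
    Module (MvPolynomial (Fin n) k) (Fstar k n p l N) :=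
  inferInstanceAs
    (Module (FrobTarget k n p l) (FrobTarget k n p l ⊗[MvPolynomial (Fin n) k] N))

/-- The canonical identification of `R` with the target copy of `R`. -/
def toT (k : Type) [Field k] (n p l : ℕ) (r : MvPolynomial (Fin n) k) :
    FrobTarget k n p l := r

/-- Elementary tensors `b ⊗ y` in `F^{*l}(N)`. -/
def tensorMk (k : Type) [Field k] (n p l : ℕ) [Fact p.Prime] [CharP k p]
    (N : Type) [AddCommGroup N] [Module (MvPolynomial (Fin n) k) N]
    (b : FrobTarget k n p l) (y : N) : Fstar k n p l N :=
  b ⊗ₜ[MvPolynomial (Fin n) k] y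

/-- The monomial `e_ī = x₁^{i₁} ⋯ xₙ^{iₙ}` in the target copy of `R`. -/
def eMono (k : Type) [Field k] (n p l : ℕ) (v : Fin n → ℕ) : FrobTarget k n p l :=
  toT k n p l (∏ j, X j ^ v j)

/-- The degree-`d` component of `F^{*l}(N)` for a `ℤ`-graded module `N`:  the additive span of
the elementary tensors `r ⊗ y` with `r ∈ R_a`, `y ∈ N_b` and `a + p^l • b = d`. -/
def FstarGrade (k : Type) [Field k] (n p l : ℕ) [Fact p.Prime] [CharP k p]
    (N : Type) [AddCommGroup N] [Module (MvPolynomial (Fin n) k) N]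
    (𝓝 : ℤ → AddSubgroup N) (d : ℤ) : AddSubgroup (Fstar k n p l N) :=
  AddSubgroup.closure { z | ∃ (a : ℕ) (b : ℤ) (r : MvPolynomial (Fin n) k) (y : N),
    r ∈ homogeneousSubmodule (Fin n) k a ∧ y ∈ 𝓝 b ∧ (a : ℤ) + (p : ℤ) ^ l * b = d ∧
    z = tensorMk k n p l N (toT k n p l r) y }

/-- The top multi-index `(p^l − 1, …, p^l − 1)`. -/
def topIdx (n p l : ℕ) [Fact p.Prime] : Fin n → Fin (p ^ l) :=
  fun _ => ⟨p ^ l - 1, Nat.sub_lt (pow_pos (Fact.out : p.Prime).pos l) one_pos⟩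
/-- Restriction of scalars `F^l_*(M)`: the `R`-module `M` regarded as an `R`-module
through `φ_l : r ↦ r^{p^l}`. -/
def FrobRestrict (k : Type) [Field k] (n p l : ℕ) (M : Type) : Type := M

instance (k : Type) [Field k] (n p l : ℕ) (M : Type) [AddCommGroup M] :
    AddCommGroup (FrobRestrict k n p l M) := ‹AddCommGroup M›

instance (k : Type) [Field k] (n p l : ℕ) [Fact p.Prime] [CharP k p]
    (M : Type) [AddCommGroup M] [Module (MvPolynomial (Fin n) k) M] :
    Module (MvPolynomial (Fin n) k) (FrobRestrict k n p l M) :=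
  Module.compHom M (iterateFrobenius (MvPolynomial (Fin n) k) p l)

/-- The canonical identification of `M` with `F^l_*(M)` (the identity on elements). -/
def toRes (k : Type) [Field k] (n p l : ℕ) (M : Type) (x : M) : FrobRestrict k n p l M := x


set_option linter.unusedSectionVars false

namespace S1Aux

variable (k : Type) [Field k] [PerfectField k] (p : ℕ) [Fact p.Prime] [CharP k p] (n l : ℕ)

lemma qpos : 0 < p ^ l := pow_pos (Fact.out : p.Prime).pos l

/-- p^l-th root on k -/
def rt : k ≃+* k := (iterateFrobeniusEquiv k p l).symm

lemma rt_frob (c : k) : rt k p l (c ^ p ^ l) = c := by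
  have : c ^ p ^ l = iterateFrobeniusEquiv k p l c := rfl
  rw [this]; exact (iterateFrobeniusEquiv k p l).symm_apply_apply c

lemma rt_pow (c : k) : (rt k p l c) ^ p ^ l = c :=
  (iterateFrobeniusEquiv k p l).apply_symm_apply c

lemma rt_one : rt k p l 1 = 1 := map_one _

def dmod (d : Fin n →₀ ℕ) : Fin n → Fin (p ^ l) :=
  fun j => ⟨d j % p ^ l, Nat.mod_lt _ (qpos p l)⟩

def ddiv (d : Fin n →₀ ℕ) : Fin n →₀ ℕ :=
  Finsupp.mapRange (· / p ^ l) (Nat.zero_div _) d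

def toExp (v : Fin n → ℕ) : Fin n →₀ ℕ := Finsupp.equivFunOnFinite.symm v

@[simp] lemma toExp_apply (v : Fin n → ℕ) (j : Fin n) : toExp n v j = v j := rfl

lemma decomp (d : Fin n →₀ ℕ) :
    p ^ l • ddiv p n l d + toExp n (fun j => ((dmod p n l d j : ℕ))) = d := by
  ext j
  simp [ddiv, dmod, toExp, Nat.div_add_mod]


/-- the coordinate map `ψ_v` -/
def psi (v : Fin n → Fin (p ^ l)) : MvPolynomial (Fin n) k →+ MvPolynomial (Fin n) k :=
  (Finsupp.liftAddHom fun d =>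
    if dmod p n l d = v then
      ((monomial (ddiv p n l d)).toAddMonoidHom.comp (rt k p l).toAddMonoidHom) else 0).comp
    AddMonoidAlgebra.coeffAddEquiv.toAddMonoidHom

lemma psi_monomial (v : Fin n → Fin (p ^ l)) (d : Fin n →₀ ℕ) (c : k) :
    psi k p n l v (monomial d c) =
      if dmod p n l d = v then monomial (ddiv p n l d) (rt k p l c) else 0 := by
  have : AddMonoidAlgebra.coeffAddEquiv (monomial d c : MvPolynomial (Fin n) k) = Finsupp.single d c := rfl
  rw [psi, AddMonoidHom.comp_apply]; erw [this]; erw [Finsupp.liftAddHom_apply_single]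
  split <;> rfl

lemma E_cond {m : ℕ} (hm : 0 < m) (a b : ℕ) (ha : a < m) (hb : b < m) :
    ((m - 1 - a + b) % m = m - 1) ↔ a = b := by
  rcases lt_or_ge (m - 1 - a + b) m with h | h
  · rw [Nat.mod_eq_of_lt h]; omega
  · have h2 : (m - 1 - a + b) % m = m - 1 - a + b - m := by
      rw [Nat.mod_eq_sub_mod h, Nat.mod_eq_of_lt (by omega)]
    omega


lemma psi_frob_mul (v : Fin n → Fin (p ^ l)) (r s : MvPolynomial (Fin n) k) :
    psi k p n l v (r ^ p ^ l * s) = r * psi k p n l v s := by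
  induction s using MvPolynomial.induction_on' with
  | add s t hs ht => rw [mul_add, map_add, map_add, hs, ht, mul_add]
  | monomial d c =>
    induction r using MvPolynomial.induction_on' with
    | add r t hr ht => rw [add_pow_char_pow, add_mul, map_add, hr, ht, add_mul]
    | monomial a b =>
      rw [monomial_pow, monomial_mul, psi_monomial, psi_monomial]
      have hmod : dmod p n l (p ^ l • a + d) = dmod p n l d := by
        funext j
        simp only [dmod, Finsupp.coe_add, Finsupp.coe_smul, Pi.add_apply, Pi.smul_apply,
          smul_eq_mul, Fin.mk.injEq]
        exact Nat.mul_add_mod _ _ _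
      have hdiv : ddiv p n l (p ^ l • a + d) = a + ddiv p n l d := by
        ext j
        simp only [ddiv, Finsupp.mapRange_apply, Finsupp.coe_add, Finsupp.coe_smul,
          Pi.add_apply, Pi.smul_apply, smul_eq_mul]
        exact Nat.mul_add_div (qpos p l) _ _
      rw [hmod, hdiv, map_mul, rt_frob]
      split
      · rw [monomial_mul]
      · rw [mul_zero]

/-- The monomial with exponent vector given by a function. -/
def E (f : Fin n → ℕ) : MvPolynomial (Fin n) k := monomial (toExp n f) 1

lemma E_eq_prod (f : Fin n → ℕ) : E k n f = ∏ j, (X j : MvPolynomial (Fin n) k) ^ f j := by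
  rw [E, ← prod_X_pow_eq_monomial (s := toExp n f) (R := k)]
  refine Finset.prod_subset (Finset.subset_univ _) fun x _ hx => ?_
  rw [Finsupp.notMem_support_iff.mp hx, pow_zero]

lemma psi_E (v u : Fin n → Fin (p ^ l)) :
    psi k p n l v (E k n fun j => (u j : ℕ)) = if u = v then 1 else 0 := by
  rw [E, psi_monomial]
  have hmod : dmod p n l (toExp n fun j => (u j : ℕ)) = u := by
    funext j
    simp only [dmod, toExp_apply]
    exact Fin.ext (Nat.mod_eq_of_lt (u j).isLt)
  have hdiv : ddiv p n l (toExp n fun j => (u j : ℕ)) = 0 := by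
    ext j
    simp only [ddiv, Finsupp.mapRange_apply, toExp_apply, Finsupp.coe_zero, Pi.zero_apply]
    exact Nat.div_eq_of_lt (u j).isLt
  rw [hmod, hdiv, rt_one]
  split <;> simp [monomial_zero']

lemma decomp_mono (d : Fin n →₀ ℕ) (c : k) :
    (monomial (ddiv p n l d) (rt k p l c)) ^ p ^ l
        * E k n (fun j => ((dmod p n l d j : ℕ))) = monomial d c := by
  rw [monomial_pow, E, monomial_mul, mul_one, rt_pow, decomp]


variable (N : Type) [AddCommGroup N] [Module (MvPolynomial (Fin n) k) N]

def unT (s : FrobTarget k n p l) : MvPolynomial (Fin n) k := s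

lemma psi_smul (v : Fin n → Fin (p ^ l)) (c : MvPolynomial (Fin n) k)
    (s : FrobTarget k n p l) :
    psi k p n l v (c • s) = c * psi k p n l v (unT k p n l s) := by
  have h : c • s = toT k n p l (c ^ p ^ l * unT k p n l s) := by
    rw [Algebra.smul_def, RingHom.algebraMap_toAlgebra]; rfl
  rw [h]
  exact psi_frob_mul k p n l v c (unT k p n l s)

lemma smul_tensorMk (r s : MvPolynomial (Fin n) k) (y : N) :
    r • tensorMk k n p l N s y = tensorMk k n p l N (r * s) y := by
  have h := TensorProduct.smul_tmul' (R := MvPolynomial (Fin n) k)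
    (R' := FrobTarget k n p l) (M := FrobTarget k n p l) (N := N) (toT k n p l r) s y
  exact h

lemma move_tensorMk (r s : MvPolynomial (Fin n) k) (y : N) :
    tensorMk k n p l N (r ^ p ^ l * s) y = tensorMk k n p l N s (r • y) := by
  have h : (toT k n p l (r ^ p ^ l * s)) = r • (toT k n p l s) := by
    rw [Algebra.smul_def, RingHom.algebraMap_toAlgebra]; rfl
  show tensorMk k n p l N (toT k n p l (r ^ p ^ l * s)) y = _
  rw [h]
  exact TensorProduct.smul_tmul r (toT k n p l s) y

def coordBil : FrobTarget k n p l →ₗ[MvPolynomial (Fin n) k]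
    (N →ₗ[MvPolynomial (Fin n) k] N) where
  toFun s := psi k p n l (topIdx n p l) s • LinearMap.id
  map_add' s t := by
    show psi k p n l (topIdx n p l) (unT k p n l s + unT k p n l t) • LinearMap.id = _
    rw [map_add, add_smul]; rfl
  map_smul' c s := by
    show psi k p n l (topIdx n p l) (c • s) • LinearMap.id = _
    rw [psi_smul, mul_smul]
    rfl

/-- the top-coordinate linear map on `F^{*l}(N)`, linear w.r.t. the base `R`-structure -/
def coordTop : FrobTarget k n p l ⊗[MvPolynomial (Fin n) k] N →ₗ[MvPolynomial (Fin n) k] N :=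
  TensorProduct.lift (coordBil k p n l N)

lemma coordTop_tensorMk (s : MvPolynomial (Fin n) k) (y : N) :
    coordTop k p n l N (tensorMk k n p l N s y) = psi k p n l (topIdx n p l) s • y := rfl

lemma coordTop_frob_smul (r : MvPolynomial (Fin n) k) (z : Fstar k n p l N) :
    coordTop k p n l N ((r ^ p ^ l) • z) = r • coordTop k p n l N z := by
  have h : (r ^ p ^ l) • z
      = r • (show FrobTarget k n p l ⊗[MvPolynomial (Fin n) k] N from z) :=
    algebraMap_smul (A := FrobTarget k n p l) r
      (show FrobTarget k n p l ⊗[MvPolynomial (Fin n) k] N from z)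
  rw [h, map_smul]

variable (M : Type) [AddCommGroup M] [Module (MvPolynomial (Fin n) k) M]

lemma toRes_smul (r : MvPolynomial (Fin n) k) (x : M) :
    r • toRes k n p l M x = toRes k n p l M ((r ^ p ^ l) • x) := rfl

lemma g_smul (g : FrobRestrict k n p l M →ₗ[MvPolynomial (Fin n) k] N)
    (r : MvPolynomial (Fin n) k) (x : M) :
    r • g (toRes k n p l M x) = g (toRes k n p l M ((r ^ p ^ l) • x)) := by
  rw [← toRes_smul, map_smul]

/-- translation by `d` on multi-indices, mod `p ^ l` -/
def sigma (d : Fin n →₀ ℕ) : (Fin n → Fin (p ^ l)) → (Fin n → Fin (p ^ l)) :=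
  fun v j => ⟨(d j + (v j : ℕ)) % p ^ l, Nat.mod_lt _ (qpos p l)⟩

lemma sigma_bijective (d : Fin n →₀ ℕ) : Function.Bijective (sigma p n l d) := by
  haveI : NeZero (p ^ l) := ⟨(qpos p l).ne'⟩
  have h : sigma p n l d = fun v j =>
      (⟨d j % p ^ l, Nat.mod_lt _ (qpos p l)⟩ : Fin (p ^ l)) + v j := by
    funext v j
    simp only [sigma, Fin.add_def]
    congr 1
    rw [Nat.mod_add_mod]
  rw [h]
  exact (Equiv.piCongrRight fun j =>
    Equiv.addLeft (⟨d j % p ^ l, Nat.mod_lt _ (qpos p l)⟩ : Fin (p ^ l))).bijective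

lemma toRes_add (a b : M) :
    toRes k n p l M (a + b) = toRes k n p l M a + toRes k n p l M b := rfl

lemma tensorMk_add (s : MvPolynomial (Fin n) k) (y z : N) :
    tensorMk k n p l N s (y + z) = tensorMk k n p l N s y + tensorMk k n p l N s z :=
  TensorProduct.tmul_add _ _ _

lemma dmod_add_toExp (d : Fin n →₀ ℕ) (v : Fin n → Fin (p ^ l)) :
    dmod p n l (d + toExp n fun j => (v j : ℕ)) = sigma p n l d v := by
  funext j
  simp only [dmod, sigma, Finsupp.coe_add, Pi.add_apply, toExp_apply]

lemma ddiv_add_toExp (d : Fin n →₀ ℕ) (v : Fin n → Fin (p ^ l)) (j : Fin n) :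
    ddiv p n l (d + toExp n fun j => (v j : ℕ)) j = (d j + (v j : ℕ)) / p ^ l := by
  simp only [ddiv, Finsupp.mapRange_apply, Finsupp.coe_add, Pi.add_apply, toExp_apply]

lemma keyterm (g : FrobRestrict k n p l M →ₗ[MvPolynomial (Fin n) k] N)
    (d : Fin n →₀ ℕ) (c : k) (x : M) (v : Fin n → Fin (p ^ l)) :
    (monomial d c : MvPolynomial (Fin n) k) •
        tensorMk k n p l N (E k n fun j => (v j : ℕ))
          (g (toRes k n p l M ((E k n fun j => p ^ l - 1 - (v j : ℕ)) • x)))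
      = tensorMk k n p l N (E k n fun j => ((sigma p n l d v j : ℕ)))
          (g (toRes k n p l M
            (((monomial d c : MvPolynomial (Fin n) k)
              * E k n fun j => p ^ l - 1 - ((sigma p n l d v j : ℕ))) • x))) := by
  set D := d + toExp n fun j => (v j : ℕ) with hD
  have h1 : (monomial d c : MvPolynomial (Fin n) k) * E k n (fun j => (v j : ℕ))
      = (monomial (ddiv p n l D) (rt k p l c)) ^ p ^ l
        * E k n (fun j => ((sigma p n l d v j : ℕ))) := by
    rw [E, monomial_mul, mul_one, ← decomp_mono k p n l D c, dmod_add_toExp]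
  have h2 : (monomial (ddiv p n l D) (rt k p l c)) ^ p ^ l
        * E k n (fun j => p ^ l - 1 - (v j : ℕ))
      = (monomial d c : MvPolynomial (Fin n) k)
        * E k n (fun j => p ^ l - 1 - ((sigma p n l d v j : ℕ))) := by
    rw [monomial_pow, rt_pow, E, E, monomial_mul, monomial_mul]
    simp only [mul_one]
    refine congrArg (fun e => (monomial e c : MvPolynomial (Fin n) k)) ?_
    ext j
    have hdm := Nat.div_add_mod (d j + (v j : ℕ)) (p ^ l)
    have hv := (v j).isLt
    have hmlt : (d j + (v j : ℕ)) % p ^ l < p ^ l := Nat.mod_lt _ (qpos p l)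
    simp only [hD, Finsupp.coe_add, Pi.add_apply, Finsupp.coe_smul, Pi.smul_apply,
      smul_eq_mul, toExp_apply, ddiv_add_toExp, sigma]
    omega
  rw [smul_tensorMk, h1, move_tensorMk, g_smul, smul_smul, h2]

lemma keySmul (g : FrobRestrict k n p l M →ₗ[MvPolynomial (Fin n) k] N)
    (r : MvPolynomial (Fin n) k) (x : M) :
    r • (∑ v : Fin n → Fin (p ^ l),
        tensorMk k n p l N (E k n fun j => (v j : ℕ))
          (g (toRes k n p l M ((E k n fun j => p ^ l - 1 - (v j : ℕ)) • x))))
      = ∑ v : Fin n → Fin (p ^ l),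
        tensorMk k n p l N (E k n fun j => (v j : ℕ))
          (g (toRes k n p l M ((r * E k n fun j => p ^ l - 1 - (v j : ℕ)) • x))) := by
  induction r using MvPolynomial.induction_on' with
  | add r t hr ht =>
    rw [add_smul, hr, ht, ← Finset.sum_add_distrib]
    refine Finset.sum_congr rfl fun v _ => ?_
    rw [add_mul, add_smul, toRes_add, map_add, tensorMk_add]
  | monomial d c =>
    rw [Finset.smul_sum]
    calc ∑ v : Fin n → Fin (p ^ l), (monomial d c : MvPolynomial (Fin n) k) •
          tensorMk k n p l N (E k n fun j => (v j : ℕ))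
            (g (toRes k n p l M ((E k n fun j => p ^ l - 1 - (v j : ℕ)) • x)))
        = ∑ v : Fin n → Fin (p ^ l),
            tensorMk k n p l N (E k n fun j => ((sigma p n l d v j : ℕ)))
              (g (toRes k n p l M
                (((monomial d c : MvPolynomial (Fin n) k)
                  * E k n fun j => p ^ l - 1 - ((sigma p n l d v j : ℕ))) • x))) :=
          Finset.sum_congr rfl fun v _ => keyterm k p n l N M g d c x v
      _ = _ := Fintype.sum_bijective (sigma p n l d) (sigma_bijective p n l d) _ _
            fun v => rfl

lemma tensorMk_zero (s : MvPolynomial (Fin n) k) :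
    tensorMk k n p l N s (0 : N) = 0 := TensorProduct.tmul_zero _ _

lemma tensorMk_add_left (s t : MvPolynomial (Fin n) k) (y : N) :
    tensorMk k n p l N (s + t) y = tensorMk k n p l N s y + tensorMk k n p l N t y :=
  TensorProduct.add_tmul _ _ _

lemma E_mul_E (f h : Fin n → ℕ) :
    E k n f * E k n h = monomial (toExp n f + toExp n h) (1 : k) := by
  rw [E, E, monomial_mul, mul_one]

lemma cond_iff (v u : Fin n → Fin (p ^ l)) :
    dmod p n l (toExp n (fun j => p ^ l - 1 - (v j : ℕ)) + toExp n (fun j => (u j : ℕ)))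
      = topIdx n p l ↔ v = u := by
  have h : ∀ j, ((toExp n (fun j => p ^ l - 1 - (v j : ℕ)) + toExp n fun j => (u j : ℕ)) j)
      = p ^ l - 1 - (v j : ℕ) + (u j : ℕ) := fun j => by
    simp only [Finsupp.coe_add, Pi.add_apply, toExp_apply]
  rw [funext_iff, funext_iff]
  refine forall_congr' fun j => ?_
  rw [Fin.ext_iff, Fin.ext_iff]
  show ((toExp n (fun j => p ^ l - 1 - (v j : ℕ)) + toExp n fun j => (u j : ℕ)) j) % p ^ l
      = p ^ l - 1 ↔ (v j : ℕ) = (u j : ℕ)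
  rw [h j]
  exact E_cond (qpos p l) _ _ (v j).isLt (u j).isLt

lemma ddiv_compl (u : Fin n → Fin (p ^ l)) :
    ddiv p n l (toExp n (fun j => p ^ l - 1 - (u j : ℕ)) + toExp n (fun j => (u j : ℕ))) = 0 := by
  ext j
  simp only [ddiv, Finsupp.mapRange_apply, Finsupp.coe_add, Pi.add_apply, toExp_apply,
    Finsupp.coe_zero, Pi.zero_apply]
  have := (u j).isLt
  apply Nat.div_eq_of_lt
  omega

lemma recon_tmul (s : MvPolynomial (Fin n) k) (y : N) :
    ∑ v : Fin n → Fin (p ^ l),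
      tensorMk k n p l N (E k n fun j => (v j : ℕ))
        (coordTop k p n l N
          ((E k n fun j => p ^ l - 1 - (v j : ℕ)) • tensorMk k n p l N s y))
      = tensorMk k n p l N s y := by
  induction s using MvPolynomial.induction_on' with
  | add s t hs ht =>
    have h1 : ∀ v : Fin n → Fin (p ^ l),
        tensorMk k n p l N (E k n fun j => (v j : ℕ))
          (coordTop k p n l N
            ((E k n fun j => p ^ l - 1 - (v j : ℕ)) • tensorMk k n p l N (s + t) y))
        = tensorMk k n p l N (E k n fun j => (v j : ℕ))
            (coordTop k p n l N
              ((E k n fun j => p ^ l - 1 - (v j : ℕ)) • tensorMk k n p l N s y))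
          + tensorMk k n p l N (E k n fun j => (v j : ℕ))
            (coordTop k p n l N
              ((E k n fun j => p ^ l - 1 - (v j : ℕ)) • tensorMk k n p l N t y)) := by
      intro v
      rw [tensorMk_add_left, smul_add]; erw [map_add]; rw [tensorMk_add]
    rw [Finset.sum_congr rfl fun v _ => h1 v, Finset.sum_add_distrib, hs, ht,
      ← tensorMk_add_left]
  | monomial d c =>
    rw [← decomp_mono k p n l d c, move_tensorMk]
    set u := fun j => ((dmod p n l d j : ℕ)) with hu
    set y' := (monomial (ddiv p n l d) (rt k p l c) : MvPolynomial (Fin n) k) • y with hy'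
    have hterm : ∀ v : Fin n → Fin (p ^ l),
        tensorMk k n p l N (E k n fun j => (v j : ℕ))
          (coordTop k p n l N
            ((E k n fun j => p ^ l - 1 - (v j : ℕ)) • tensorMk k n p l N (E k n u) y'))
        = if v = dmod p n l d then tensorMk k n p l N (E k n u) y' else 0 := by
      intro v
      rw [smul_tensorMk, E_mul_E, coordTop_tensorMk, psi_monomial]
      have hcond := cond_iff p n l v (dmod p n l d)
      by_cases hv : v = dmod p n l d
      · subst hv
        rw [if_pos (hcond.mpr rfl), if_pos rfl, ddiv_compl, rt_one, monomial_zero', C_1,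
          one_smul]
      · rw [if_neg (fun hc => hv (hcond.mp hc)), if_neg hv, zero_smul, tensorMk_zero]
    rw [Finset.sum_congr rfl fun v _ => hterm v]
    simp only [Finset.sum_ite_eq', Finset.mem_univ, if_pos]

lemma recon (z : Fstar k n p l N) :
    ∑ v : Fin n → Fin (p ^ l),
      tensorMk k n p l N (E k n fun j => (v j : ℕ))
        (coordTop k p n l N ((E k n fun j => p ^ l - 1 - (v j : ℕ)) • z))
      = z := by
  induction z using TensorProduct.induction_on with
  | zero =>
    refine Finset.sum_eq_zero fun v _ => ?_
    have h0 : ∀ a : MvPolynomial (Fin n) k, a • (0 : Fstar k n p l N) = 0 := fun a =>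
      smul_zero (A := FrobTarget k n p l ⊗[MvPolynomial (Fin n) k] N) (toT k n p l a)
    erw [h0, map_zero, tensorMk_zero]
  | tmul s y => exact recon_tmul k p n l N (unT k p n l s) y
  | add z w hz hw =>
    conv_rhs => rw [← hz, ← hw]
    refine Eq.trans ?_ Finset.sum_add_distrib
    refine Finset.sum_congr rfl fun v _ => ?_
    have h0 : ∀ (a : MvPolynomial (Fin n) k) (z w : Fstar k n p l N), a • (z + w) = a • z + a • w :=
      fun a z w =>
        smul_add (A := FrobTarget k n p l ⊗[MvPolynomial (Fin n) k] N) (toT k n p l a) z w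
    erw [h0, map_add, tensorMk_add]

lemma E_top_compl : E k n (fun j => p ^ l - 1 - ((topIdx n p l j : ℕ))) = 1 := by
  have h : (fun j : Fin n => p ^ l - 1 - ((topIdx n p l j : ℕ))) = fun _ => 0 := by
    funext j
    show p ^ l - 1 - (p ^ l - 1) = 0
    omega
  rw [h, E]
  have h2 : toExp n (fun _ : Fin n => 0) = 0 := by ext j; rfl
  rw [h2, monomial_zero', C_1]

lemma eMono_eq (f : Fin n → ℕ) : eMono k n p l f = E k n f := by
  rw [E_eq_prod]; rfl

/-- The forward map `Θ`. -/
def Tmap (g : FrobRestrict k n p l M →ₗ[MvPolynomial (Fin n) k] N) :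
    M →ₗ[MvPolynomial (Fin n) k] Fstar k n p l N where
  toFun x := ∑ v : Fin n → Fin (p ^ l),
    tensorMk k n p l N (E k n fun j => (v j : ℕ))
      (g (toRes k n p l M ((E k n fun j => p ^ l - 1 - (v j : ℕ)) • x)))
  map_add' x y := by
    simp only [smul_add, toRes_add, map_add, tensorMk_add, Finset.sum_add_distrib]
  map_smul' r x := by
    rw [RingHom.id_apply]
    have h1 : ∀ v : Fin n → Fin (p ^ l),
        (E k n fun j => p ^ l - 1 - (v j : ℕ)) • (r • x)
          = (r * E k n fun j => p ^ l - 1 - (v j : ℕ)) • x := by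
      intro v; rw [smul_smul, mul_comm]
    simp only [h1]
    exact (keySmul k p n l N M g r x).symm

/-- The backward map `Θ⁻¹`. -/
def Umap (f : M →ₗ[MvPolynomial (Fin n) k] Fstar k n p l N) :
    FrobRestrict k n p l M →ₗ[MvPolynomial (Fin n) k] N where
  toFun x := coordTop k p n l N (f x)
  map_add' x y := by
    exact (congrArg (coordTop k p n l N) (map_add f x y)).trans
      (map_add (coordTop k p n l N) (f x) (f y))
  map_smul' r x := by
    show coordTop k p n l N (f (r • x)) = r • coordTop k p n l N (f x)
    have h1 : f (r • x) = (r ^ p ^ l) • f x := map_smul f (r ^ p ^ l) (show M from x)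
    rw [h1, coordTop_frob_smul]

lemma U_T_aux (g : FrobRestrict k n p l M →ₗ[MvPolynomial (Fin n) k] N) (x : M) :
    Umap k p n l N M (Tmap k p n l N M g) (toRes k n p l M x)
      = g (toRes k n p l M x) := by
  show coordTop k p n l N (∑ v : Fin n → Fin (p ^ l),
    tensorMk k n p l N (E k n fun j => (v j : ℕ))
      (g (toRes k n p l M ((E k n fun j => p ^ l - 1 - (v j : ℕ)) • x))))
    = g (toRes k n p l M x)
  refine (map_sum (coordTop k p n l N) _ _).trans ?_
  have h1 : ∀ v : Fin n → Fin (p ^ l),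
      coordTop k p n l N (tensorMk k n p l N (E k n fun j => (v j : ℕ))
        (g (toRes k n p l M ((E k n fun j => p ^ l - 1 - (v j : ℕ)) • x))))
      = if v = topIdx n p l then
          g (toRes k n p l M ((E k n fun j => p ^ l - 1 - (v j : ℕ)) • x)) else 0 := by
    intro v
    rw [coordTop_tensorMk, psi_E]
    split <;> simp only [one_smul, zero_smul]
  rw [Finset.sum_congr rfl fun v _ => h1 v]
  simp only [Finset.sum_ite_eq', Finset.mem_univ, if_pos]
  rw [E_top_compl, one_smul]

lemma U_T (g : FrobRestrict k n p l M →ₗ[MvPolynomial (Fin n) k] N) :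
    Umap k p n l N M (Tmap k p n l N M g) = g :=
  LinearMap.ext fun x => U_T_aux k p n l N M g x

lemma T_U (f : M →ₗ[MvPolynomial (Fin n) k] Fstar k n p l N) :
    Tmap k p n l N M (Umap k p n l N M f) = f := by
  refine LinearMap.ext fun x => ?_
  show (∑ v : Fin n → Fin (p ^ l),
    tensorMk k n p l N (E k n fun j => (v j : ℕ))
      (coordTop k p n l N (f ((E k n fun j => p ^ l - 1 - (v j : ℕ)) • x)))) = f x
  have h1 : ∀ v : Fin n → Fin (p ^ l),
      f ((E k n fun j => p ^ l - 1 - (v j : ℕ)) • x)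
        = (E k n fun j => p ^ l - 1 - (v j : ℕ)) • f x := fun v => map_smul f _ x
  simp only [h1]
  exact recon k p n l N (f x)

end S1Aux

/-- the duality theorem.  For `k` perfect of characteristic `p > 0`
and `R`-modules `M`, `N`, the map
`Θ : Hom_R(F^l_*(M), N) → Hom_R(M, F^{*l}(N))`,
`Θ(g)(x) = Σ_v e_v ⊗ g(e_{(p^l−1,…,p^l−1) − v} • x)`,
is an `R`-linear bijection (where `Hom_R(F^l_*(M), N)` carries the module structure
`(r·g)(x) = g(r·x)`); its inverse sends `f` to the top coordinate function
`f_{(p^l−1,…,p^l−1)}` of the unique basis expansion `f(x) = Σ_v e_v ⊗ f_v(x)`. -/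
theorem statement1 (k : Type) [Field k] [PerfectField k] (p : ℕ) [Fact p.Prime] [CharP k p]
    (n l : ℕ) (hl : 1 ≤ l)
    (M N : Type) [AddCommGroup M] [Module (MvPolynomial (Fin n) k) M]
    [AddCommGroup N] [Module (MvPolynomial (Fin n) k) N] :
    ∃ Θ : (FrobRestrict k n p l M →ₗ[MvPolynomial (Fin n) k] N) ≃
        (M →ₗ[MvPolynomial (Fin n) k] Fstar k n p l N),
      -- the formula defining `Θ`
      (∀ g (x : M), Θ g x =
        ∑ v : Fin n → Fin (p ^ l),
          tensorMk k n p l N (eMono k n p l fun j => (v j : ℕ))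
            (g (toRes k n p l M ((∏ j, (X j : MvPolynomial (Fin n) k) ^ (p ^ l - 1 - (v j : ℕ))) • x)))) ∧
      -- `Θ` is additive
      (∀ g₁ g₂, Θ (g₁ + g₂) = Θ g₁ + Θ g₂) ∧
      -- `Θ` is `R`-linear for the module structure `(r·g)(x) = g(r·x)` on the source
      (∀ (r : MvPolynomial (Fin n) k) g h, (∀ x : M, h x = g (toRes k n p l M (r • x))) → Θ h = r • Θ g) ∧
      -- the inverse of `Θ` sends `f` to the coordinate function `f_{(p^l−1,…,p^l−1)}`
      (∀ f (x : M) (c : (Fin n → Fin (p ^ l)) → N),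
        f x = ∑ v : Fin n → Fin (p ^ l),
            tensorMk k n p l N (eMono k n p l fun j => (v j : ℕ)) (c v) →
        Θ.symm f x = c (topIdx n p l)) := by
  classical
  refine ⟨⟨S1Aux.Tmap k p n l N M, S1Aux.Umap k p n l N M,
      fun g => S1Aux.U_T k p n l N M g, fun f => S1Aux.T_U k p n l N M f⟩,
      ?_, ?_, ?_, ?_⟩
  · -- the defining formula
    intro g x
    show (∑ v : Fin n → Fin (p ^ l),
      tensorMk k n p l N (S1Aux.E k n fun j => (v j : ℕ))
        (g (toRes k n p l M ((S1Aux.E k n fun j => p ^ l - 1 - (v j : ℕ)) • x)))) = _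
    simp only [S1Aux.eMono_eq, S1Aux.E_eq_prod]
  · -- additivity
    intro g₁ g₂
    refine LinearMap.ext fun x => ?_
    show (∑ v : Fin n → Fin (p ^ l),
      tensorMk k n p l N (S1Aux.E k n fun j => (v j : ℕ))
        ((g₁ + g₂) (toRes k n p l M ((S1Aux.E k n fun j => p ^ l - 1 - (v j : ℕ)) • x))))
      = (∑ v : Fin n → Fin (p ^ l),
          tensorMk k n p l N (S1Aux.E k n fun j => (v j : ℕ))
            (g₁ (toRes k n p l M ((S1Aux.E k n fun j => p ^ l - 1 - (v j : ℕ)) • x))))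
        + ∑ v : Fin n → Fin (p ^ l),
            tensorMk k n p l N (S1Aux.E k n fun j => (v j : ℕ))
              (g₂ (toRes k n p l M ((S1Aux.E k n fun j => p ^ l - 1 - (v j : ℕ)) • x)))
    simp only [LinearMap.add_apply, S1Aux.tensorMk_add, Finset.sum_add_distrib]
  · -- R-linearity
    intro r g h hx
    have hgh : ∀ (m : M), h (toRes k n p l M m) = g (toRes k n p l M (r • m)) :=
      fun m => hx m
    refine LinearMap.ext fun x => ?_
    show (∑ v : Fin n → Fin (p ^ l),
      tensorMk k n p l N (S1Aux.E k n fun j => (v j : ℕ))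
        (h (toRes k n p l M ((S1Aux.E k n fun j => p ^ l - 1 - (v j : ℕ)) • x))))
      = r • ∑ v : Fin n → Fin (p ^ l),
          tensorMk k n p l N (S1Aux.E k n fun j => (v j : ℕ))
            (g (toRes k n p l M ((S1Aux.E k n fun j => p ^ l - 1 - (v j : ℕ)) • x)))
    rw [S1Aux.keySmul]
    refine Finset.sum_congr rfl fun v _ => ?_
    rw [hgh, smul_smul]
  · -- inverse formula
    intro f x c hfx
    show S1Aux.coordTop k p n l N (f x) = c (topIdx n p l)
    rw [hfx]
    refine (map_sum (S1Aux.coordTop k p n l N) _ _).trans ?_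
    have h1 : ∀ v : Fin n → Fin (p ^ l),
        S1Aux.coordTop k p n l N
          (tensorMk k n p l N (eMono k n p l fun j => (v j : ℕ)) (c v))
        = if v = topIdx n p l then c v else 0 := by
      intro v
      rw [S1Aux.eMono_eq, S1Aux.coordTop_tensorMk, S1Aux.psi_E]
      split <;> simp only [one_smul, zero_smul]
    rw [Finset.sum_congr rfl fun v _ => h1 v]
    simp only [Finset.sum_ite_eq', Finset.mem_univ, if_pos]
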